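/- For each l ≥ 1 there is a constant c₁ > 0 such that for all x ∈ ℝ^d and λ ≥ 0, -∂θ^{(l)}/∂λ (x,λ) ≥ c₁ · (1 + log(1+|x|²))^{1/2} · θ^{(l)}(x,λ). -/

import Mathlib

/-- The iterated-logarithm hierarchy: `iterLog α 0 = α`,
`iterLog α (l+1) = log (e + iterLog α l)`. -/
noncomputable def iterLog (α : ℝ → ℝ) : ℕ → ℝ → ℝ
  | 0 => α
  | l + 1 => fun x => Real.log (Real.exp 1 + iterLog α l x)

/-- The modified `θ`-function
`θ^{(l)}(x,λ) = exp[-(λ/α_l(λ)^{1/2})·(1+λ²+log(1+|x|²)·α_l(√(1+|x|²)))^{1/2}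
                 - log(1+|x|²)·α_l(√(1+|x|²))]`. -/
noncomputable def theta (α : ℝ → ℝ) (l : ℕ) {d : ℕ}
    (x : EuclideanSpace ℝ (Fin d)) (lam : ℝ) : ℝ :=
  Real.exp (-(lam / Real.sqrt (iterLog α l lam)) *
      Real.sqrt (1 + lam ^ 2 +
        Real.log (1 + ‖x‖ ^ 2) * iterLog α l (Real.sqrt (1 + ‖x‖ ^ 2))) -
    Real.log (1 + ‖x‖ ^ 2) * iterLog α l (Real.sqrt (1 + ‖x‖ ^ 2)))

open Real Set Filter

lemma iterLog_ge_one (α : ℝ → ℝ) (hmono : MonotoneOn α (Set.Ici 0)) (h0 : 1 ≤ α 0) :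
    ∀ l (t : ℝ), 0 ≤ t → 1 ≤ iterLog α l t := by
  intro l
  induction l with
  | zero =>
    intro t ht
    exact h0.trans (hmono (Set.self_mem_Ici) ht ht)
  | succ m ih =>
    intro t ht
    have h1 := ih t ht
    have h2 : Real.exp 1 ≤ Real.exp 1 + iterLog α m t := by linarith
    calc (1:ℝ) = Real.log (Real.exp 1) := (Real.log_exp 1).symm
      _ ≤ Real.log (Real.exp 1 + iterLog α m t) := Real.log_le_log (Real.exp_pos 1) h2
      _ = iterLog α (m+1) t := by simp [iterLog]

lemma iterLog_mono (α : ℝ → ℝ) (hmono : MonotoneOn α (Set.Ici 0)) (h0 : 1 ≤ α 0) :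
    ∀ l, MonotoneOn (iterLog α l) (Set.Ici 0) := by
  intro l
  induction l with
  | zero => exact hmono
  | succ m ih =>
    intro s hs t ht hst
    have h1 := iterLog_ge_one α hmono h0 m s hs
    have h2 : iterLog α m s ≤ iterLog α m t := ih hs ht hst
    have hpos : 0 < Real.exp 1 + iterLog α m s := by linarith [Real.exp_pos 1]
    simp only [iterLog]
    exact Real.log_le_log hpos (by linarith)

lemma deriv_nonneg_of_monotoneOn (α : ℝ → ℝ) (hd1 : Differentiable ℝ α)
    (hmono : MonotoneOn α (Set.Ici 0)) {t : ℝ} (ht : 0 ≤ t) : 0 ≤ deriv α t := by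
  have hda := (hd1 t).hasDerivAt
  have htend : Filter.Tendsto (slope α t) (nhdsWithin t (Set.Ioi t)) (nhds (deriv α t)) :=
    (hasDerivAt_iff_tendsto_slope.mp hda).mono_left
      (nhdsWithin_mono t (fun y hy => Set.mem_compl_singleton_iff.mpr (Set.mem_Ioi.mp hy).ne'))
  refine ge_of_tendsto htend ?_
  filter_upwards [self_mem_nhdsWithin] with y hy
  have hty : t < y := hy
  have hmem : α t ≤ α y := hmono ht (le_trans ht hty.le) hty.le
  rw [slope_def_field]
  exact div_nonneg (by linarith) (by linarith)

/-- derivative package for iterLog -/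
lemma iterLog_pack (α : ℝ → ℝ) (hd1 : Differentiable ℝ α)
    (hmono : MonotoneOn α (Set.Ici 0)) (h0 : 1 ≤ α 0)
    (hder : ∀ x : ℝ, 0 ≤ x → deriv α x ≤ α x / (1 + x)) :
    ∀ l (t : ℝ), 0 ≤ t → ∃ d, HasDerivAt (iterLog α l) d t ∧ 0 ≤ d ∧
      d * (1 + t) ≤ iterLog α l t ∧ (1 ≤ l → d * (1 + t) ≤ 1) := by
  intro l
  induction l with
  | zero =>
    intro t ht
    refine ⟨deriv α t, (hd1 t).hasDerivAt, deriv_nonneg_of_monotoneOn α hd1 hmono ht, ?_, by omega⟩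
    have h1 := hder t ht
    have h2 : (0:ℝ) < 1 + t := by linarith
    calc deriv α t * (1 + t) ≤ (α t / (1 + t)) * (1 + t) :=
          mul_le_mul_of_nonneg_right h1 h2.le
      _ = α t := by field_simp
  | succ m ih =>
    intro t ht
    obtain ⟨d, hd, hd0, hdle, _⟩ := ih t ht
    have h1 : 1 ≤ iterLog α m t := iterLog_ge_one α hmono h0 m t ht
    have hpos : 0 < Real.exp 1 + iterLog α m t := by linarith [Real.exp_pos 1]
    have hlog : HasDerivAt (fun y => Real.log (Real.exp 1 + iterLog α m y))
        ((Real.exp 1 + iterLog α m t)⁻¹ * d) t := by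
      have := (Real.hasDerivAt_log hpos.ne').comp t ((hd.const_add (Real.exp 1)))
      simpa [Function.comp_def] using this
    have hstep : HasDerivAt (iterLog α (m+1)) ((Real.exp 1 + iterLog α m t)⁻¹ * d) t := by
      simpa only [iterLog] using hlog
    refine ⟨_, hstep, by positivity, ?_, fun _ => ?_⟩
    · have h2 : 1 ≤ iterLog α (m+1) t := iterLog_ge_one α hmono h0 (m+1) t ht
      have h3 : (Real.exp 1 + iterLog α m t)⁻¹ * d * (1 + t) ≤ 1 := by
        rw [mul_comm ((Real.exp 1 + iterLog α m t)⁻¹) d, mul_assoc] at *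
        have : d * (1 + t) ≤ Real.exp 1 + iterLog α m t := le_trans hdle (by linarith [Real.exp_pos 1])
        calc d * ((Real.exp 1 + iterLog α m t)⁻¹ * (1 + t))
            = (d * (1 + t)) * (Real.exp 1 + iterLog α m t)⁻¹ := by ring
          _ ≤ (Real.exp 1 + iterLog α m t) * (Real.exp 1 + iterLog α m t)⁻¹ :=
              mul_le_mul_of_nonneg_right this (by positivity)
          _ = 1 := mul_inv_cancel₀ hpos.ne'
      linarith
    · have h3 : d * (1 + t) ≤ Real.exp 1 + iterLog α m t := le_trans hdle (by linarith [Real.exp_pos 1])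
      calc (Real.exp 1 + iterLog α m t)⁻¹ * d * (1 + t)
          = (d * (1 + t)) * (Real.exp 1 + iterLog α m t)⁻¹ := by ring
        _ ≤ (Real.exp 1 + iterLog α m t) * (Real.exp 1 + iterLog α m t)⁻¹ :=
            mul_le_mul_of_nonneg_right h3 (by positivity)
        _ = 1 := mul_inv_cancel₀ hpos.ne'

lemma alpha_linear (α : ℝ → ℝ) (hd1 : Differentiable ℝ α)
    (hder : ∀ x : ℝ, 0 ≤ x → deriv α x ≤ α x / (1 + x)) :
    ∀ t : ℝ, 0 ≤ t → α t ≤ α 0 * (1 + t) := by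
  have hanti : AntitoneOn (fun t => α t / (1 + t)) (Set.Ici 0) := by
    apply antitoneOn_of_deriv_nonpos (convex_Ici 0)
    · exact (hd1.continuous.continuousOn).div (by fun_prop)
        (fun x hx => by simp only [Set.mem_Ici] at hx; positivity)
    · rw [interior_Ici]
      intro x hx
      have hxp : (0:ℝ) < x := hx
      exact ((hd1 x).div (differentiableAt_id.const_add 1) (by positivity)).differentiableWithinAt
    · rw [interior_Ici]
      intro x hx
      have hxp : (0:ℝ) < x := hx
      have hde : HasDerivAt (fun t => α t / (1 + t))
          ((deriv α x * (1 + x) - α x * 1) / (1 + x) ^ 2) x :=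
        (hd1 x).hasDerivAt.div ((hasDerivAt_id x).const_add 1) (by positivity)
      rw [hde.deriv]
      apply div_nonpos_of_nonpos_of_nonneg _ (by positivity)
      have h1 := hder x hxp.le
      have h2 : deriv α x * (1 + x) ≤ α x := by
        calc deriv α x * (1 + x) ≤ (α x / (1 + x)) * (1 + x) :=
              mul_le_mul_of_nonneg_right h1 (by positivity)
          _ = α x := by field_simp
      linarith
  intro t ht
  have := hanti Set.self_mem_Ici ht ht
  simp only [add_zero] at this
  have h2 : α t / (1 + t) ≤ α 0 := by simpa using this
  calc α t = (α t / (1 + t)) * (1 + t) := by field_simp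
    _ ≤ α 0 * (1 + t) := mul_le_mul_of_nonneg_right h2 (by positivity)

lemma log_e_add_le (y : ℝ) (hy : 0 ≤ y) :
    Real.log (Real.exp 1 + y) ≤ 1 + y / Real.exp 1 := by
  have he : (0:ℝ) < Real.exp 1 := Real.exp_pos 1
  have h1 : Real.log (Real.exp 1 + y) = 1 + Real.log ((Real.exp 1 + y) / Real.exp 1) := by
    rw [Real.log_div (by positivity) he.ne', Real.log_exp]; ring
  have h2 := Real.log_le_sub_one_of_pos (x := (Real.exp 1 + y) / Real.exp 1) (by positivity)
  have h3 : (Real.exp 1 + y) / Real.exp 1 = 1 + y / Real.exp 1 := by field_simp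
  rw [h3] at h2
  rw [h1, h3]
  linarith

lemma iterLog_linear (α : ℝ → ℝ) (hd1 : Differentiable ℝ α)
    (hmono : MonotoneOn α (Set.Ici 0)) (h0 : 1 ≤ α 0)
    (hder : ∀ x : ℝ, 0 ≤ x → deriv α x ≤ α x / (1 + x)) :
    ∀ l (t : ℝ), 0 ≤ t → iterLog α l t ≤ α 0 * (1 + t) + 2 := by
  intro l
  induction l with
  | zero =>
    intro t ht
    have := alpha_linear α hd1 hder t ht
    simpa [iterLog] using by linarith
  | succ m ih =>
    intro t ht
    have h1 : 1 ≤ iterLog α m t := iterLog_ge_one α hmono h0 m t ht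
    have h2 := ih t ht
    have he2 : (2:ℝ) ≤ Real.exp 1 := by
      have := Real.exp_one_gt_d9; linarith
    have h3 : Real.log (Real.exp 1 + iterLog α m t) ≤ 1 + iterLog α m t / Real.exp 1 :=
      log_e_add_le _ (by linarith)
    have hX : (3:ℝ) ≤ α 0 * (1 + t) + 2 := by nlinarith
    have h4 : iterLog α m t / Real.exp 1 ≤ (α 0 * (1 + t) + 2) / 2 := by
      apply div_le_div₀ (by linarith) h2 (by norm_num) he2
    have h5 : 1 + (α 0 * (1 + t) + 2) / 2 ≤ α 0 * (1 + t) + 2 := by linarith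
    calc iterLog α (m+1) t = Real.log (Real.exp 1 + iterLog α m t) := by simp [iterLog]
      _ ≤ 1 + iterLog α m t / Real.exp 1 := h3
      _ ≤ 1 + (α 0 * (1 + t) + 2) / 2 := by linarith
      _ ≤ α 0 * (1 + t) + 2 := h5

lemma iterLog_log_bound (α : ℝ → ℝ) (hd1 : Differentiable ℝ α)
    (hmono : MonotoneOn α (Set.Ici 0)) (h0 : 1 ≤ α 0)
    (hder : ∀ x : ℝ, 0 ≤ x → deriv α x ≤ α x / (1 + x)) :
    ∀ m (t : ℝ), 0 ≤ t →
      iterLog α (m+1) t ≤ Real.log (Real.exp 1 + 2 + α 0) * (1 + Real.log (1 + t)) := by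
  intro m t ht
  set K := Real.log (Real.exp 1 + 2 + α 0) with hK
  have hα0 : (1:ℝ) ≤ α 0 := h0
  have he : (0:ℝ) < Real.exp 1 := Real.exp_pos 1
  have hK1 : 1 ≤ K := by
    rw [hK]
    calc (1:ℝ) = Real.log (Real.exp 1) := (Real.log_exp 1).symm
      _ ≤ Real.log (Real.exp 1 + 2 + α 0) := Real.log_le_log he (by linarith)
  have h1 : 1 ≤ iterLog α m t := iterLog_ge_one α hmono h0 m t ht
  have h2 : iterLog α m t ≤ α 0 * (1 + t) + 2 := iterLog_linear α hd1 hmono h0 hder m t ht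
  have h3 : Real.exp 1 + iterLog α m t ≤ (Real.exp 1 + 2 + α 0) * (1 + t) := by nlinarith
  have hlog1t : 0 ≤ Real.log (1 + t) := Real.log_nonneg (by linarith)
  calc iterLog α (m+1) t = Real.log (Real.exp 1 + iterLog α m t) := by simp [iterLog]
    _ ≤ Real.log ((Real.exp 1 + 2 + α 0) * (1 + t)) := Real.log_le_log (by linarith) h3
    _ = K + Real.log (1 + t) := by
        rw [Real.log_mul (by positivity) (by positivity)]
    _ ≤ K * (1 + Real.log (1 + t)) := by nlinarith

set_option maxHeartbeats 2000000 in
/-- Lemma A.1'(a): lower bound for `-∂θ^{(l)}/∂λ`. -/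
theorem stmt_7 (d : ℕ) (α : ℝ → ℝ)
    (hd1 : Differentiable ℝ α)
    (hmono : MonotoneOn α (Set.Ici 0))
    (hconc : ConcaveOn ℝ (Set.Ici 0) α)
    (h0 : 1 ≤ α 0)
    (htend : Filter.Tendsto α Filter.atTop Filter.atTop)
    (hder : ∀ x : ℝ, 0 ≤ x → deriv α x ≤ α x / (1 + x))
    (hratio : ∀ l : ℕ, MonotoneOn (fun lam => lam / iterLog α l lam) (Set.Ioi 0)) :
    ∀ l : ℕ, 1 ≤ l → ∃ c₁ > (0:ℝ),
      ∀ (x : EuclideanSpace ℝ (Fin d)) (lam : ℝ), 0 ≤ lam →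
        c₁ * Real.sqrt (1 + Real.log (1 + ‖x‖ ^ 2)) * theta α l x lam ≤
          -deriv (fun t => theta α l x t) lam := by
  intro l hl
  obtain ⟨m, rfl⟩ : ∃ m, l = m + 1 := ⟨l - 1, (Nat.succ_pred_eq_of_pos hl).symm⟩
  have he : (0:ℝ) < Real.exp 1 := Real.exp_pos 1
  have hα0 : (1:ℝ) ≤ α 0 := h0
  set K := Real.log (Real.exp 1 + 2 + α 0) with hKdef
  have hK1 : 1 ≤ K := by
    rw [hKdef]
    calc (1:ℝ) = Real.log (Real.exp 1) := (Real.log_exp 1).symm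
      _ ≤ Real.log (Real.exp 1 + 2 + α 0) := Real.log_le_log he (by linarith)
  set C := α 0 * (1 + Real.sqrt (Real.exp 1)) + 2 with hCdef
  have hC3 : (3:ℝ) ≤ C := by
    have h1 : (0:ℝ) ≤ Real.sqrt (Real.exp 1) := Real.sqrt_nonneg _
    rw [hCdef]; nlinarith
  set M := Real.sqrt (2 + 8 * K) with hMdef
  have hM1 : 1 ≤ M := by
    rw [hMdef]
    calc (1:ℝ) = Real.sqrt 1 := Real.sqrt_one.symm
      _ ≤ Real.sqrt (2 + 8 * K) := Real.sqrt_le_sqrt (by linarith)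
  have hsqrt2 : (0:ℝ) < Real.sqrt 2 := Real.sqrt_pos.mpr (by norm_num)
  have hsqrt3 : (0:ℝ) < Real.sqrt 3 := Real.sqrt_pos.mpr (by norm_num)
  have hsC : (0:ℝ) < Real.sqrt C := Real.sqrt_pos.mpr (by linarith)
  have hsK : (1:ℝ) ≤ Real.sqrt K := by
    calc (1:ℝ) = Real.sqrt 1 := Real.sqrt_one.symm
      _ ≤ Real.sqrt K := Real.sqrt_le_sqrt (by linarith)
  have hsK0 : (0:ℝ) < Real.sqrt K := by linarith
  have hM0 : (0:ℝ) < M := by linarith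
  have hden3 : (0:ℝ) < 2 * Real.sqrt 3 * M * Real.sqrt K := by positivity
  have hc1pos : 0 < min (1/(2*Real.sqrt 2))
      (min (1/(2*Real.sqrt C)) (1/(2*Real.sqrt 3*M*Real.sqrt K))) :=
    lt_min (by positivity) (lt_min (by positivity) (by positivity))
  refine ⟨_, hc1pos, ?_⟩
  intro x lam hlam
  set c1 := min (1/(2*Real.sqrt 2))
      (min (1/(2*Real.sqrt C)) (1/(2*Real.sqrt 3*M*Real.sqrt K))) with hc1def
  have hc10 : 0 < c1 := hc1pos
  have hc1a : c1 ≤ 1/(2*Real.sqrt 2) := min_le_left _ _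
  have hc1b : c1 ≤ 1/(2*Real.sqrt C) := le_trans (min_le_right _ _) (min_le_left _ _)
  have hc1c : c1 ≤ 1/(2*Real.sqrt 3*M*Real.sqrt K) := le_trans (min_le_right _ _) (min_le_right _ _)
  -- notation
  set A := Real.log (1 + ‖x‖^2) with hAdef
  set r := Real.sqrt (1 + ‖x‖^2) with hrdef
  set B := iterLog α (m+1) r with hBdef
  have hx1 : (1:ℝ) ≤ 1 + ‖x‖^2 := le_add_of_nonneg_right (by positivity)
  have hr0 : 0 ≤ r := Real.sqrt_nonneg _
  have hr1 : 1 ≤ r := by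
    rw [hrdef]
    calc (1:ℝ) = Real.sqrt 1 := Real.sqrt_one.symm
      _ ≤ Real.sqrt (1 + ‖x‖^2) := Real.sqrt_le_sqrt hx1
  have hr2 : r^2 = 1 + ‖x‖^2 := Real.sq_sqrt (by positivity)
  have hA0 : 0 ≤ A := Real.log_nonneg hx1
  have hB1 : 1 ≤ B := iterLog_ge_one α hmono h0 (m+1) r hr0
  have hP0 : 0 ≤ A * B := mul_nonneg hA0 (by linarith)
  have hAP : A ≤ A * B := le_mul_of_one_le_right hA0 hB1
  -- derivative package at lam
  obtain ⟨dd, hdd, hdd0, hddle, hddle1⟩ := iterLog_pack α hd1 hmono h0 hder (m+1) lam hlam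
  set D := iterLog α (m+1) lam with hDdef
  have hD1 : 1 ≤ D := iterLog_ge_one α hmono h0 (m+1) lam hlam
  set sD := Real.sqrt D with hsDdef
  have hsD1 : 1 ≤ sD := by
    rw [hsDdef]
    calc (1:ℝ) = Real.sqrt 1 := Real.sqrt_one.symm
      _ ≤ Real.sqrt D := Real.sqrt_le_sqrt (by linarith)
  have hsD0 : (0:ℝ) < sD := by linarith
  have hsD2 : sD^2 = D := Real.sq_sqrt (by linarith)
  set Q := 1 + lam^2 + A * B with hQdef
  have hQ1 : 1 ≤ Q := by rw [hQdef]; linarith [sq_nonneg lam, hP0]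
  set S := Real.sqrt Q with hSdef
  have hS1 : 1 ≤ S := by
    rw [hSdef]
    calc (1:ℝ) = Real.sqrt 1 := Real.sqrt_one.symm
      _ ≤ Real.sqrt Q := Real.sqrt_le_sqrt (by linarith)
  have hS0 : (0:ℝ) < S := by linarith
  have hS2 : S^2 = Q := Real.sq_sqrt (by linarith)
  -- derivative chain
  have hDne : D ≠ 0 := by intro h; rw [h] at hD1; linarith
  have hQne : Q ≠ 0 := by intro h; rw [h] at hQ1; linarith
  have h2 : HasDerivAt (fun t => Real.sqrt (iterLog α (m+1) t)) (1/(2*sD) * dd) lam := by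
    have h := (Real.hasDerivAt_sqrt hDne).comp lam hdd
    simpa [Function.comp_def] using h
  have h3 : HasDerivAt (fun t => t / Real.sqrt (iterLog α (m+1) t))
      ((1 * sD - lam * (1/(2*sD) * dd)) / sD ^ 2) lam :=
    (hasDerivAt_id lam).div h2 hsD0.ne'
  have h4 : HasDerivAt (fun t : ℝ => 1 + t^2 + A * B) (2*lam) lam := by
    have h : HasDerivAt (fun t : ℝ => t^2) (2*lam) lam := by
      simpa using (hasDerivAt_pow 2 lam)
    exact (h.const_add 1).add_const (A*B)
  have h5 : HasDerivAt (fun t => Real.sqrt (1 + t^2 + A * B)) (1/(2*S) * (2*lam)) lam := by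
    have h := (Real.hasDerivAt_sqrt hQne).comp lam h4
    simpa [Function.comp_def] using h
  have h6 : HasDerivAt (fun t => -(t / Real.sqrt (iterLog α (m+1) t)) * Real.sqrt (1 + t^2 + A * B))
      (-((1 * sD - lam * (1/(2*sD) * dd)) / sD ^ 2) * S + -(lam / sD) * (1/(2*S) * (2*lam))) lam :=
    (h3.neg).mul h5
  have h7 : HasDerivAt
      (fun t => -(t / Real.sqrt (iterLog α (m+1) t)) * Real.sqrt (1 + t^2 + A * B) - A * B)
      (-((1 * sD - lam * (1/(2*sD) * dd)) / sD ^ 2) * S + -(lam / sD) * (1/(2*S) * (2*lam))) lam :=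
    h6.sub_const (A*B)
  have hfun : (fun t => theta α (m+1) x t) =
      (fun t => Real.exp (-(t / Real.sqrt (iterLog α (m+1) t)) *
        Real.sqrt (1 + t^2 + A * B) - A * B)) := by
    funext t
    simp only [theta, ← hAdef, ← hrdef, ← hBdef]
  have hval : Real.exp (-(lam / Real.sqrt (iterLog α (m+1) lam)) *
      Real.sqrt (1 + lam^2 + A * B) - A * B) = theta α (m+1) x lam := by
    simp only [theta, ← hAdef, ← hrdef, ← hBdef]
  have h8 : HasDerivAt (fun t => theta α (m+1) x t)
      (theta α (m+1) x lam *
        (-((1 * sD - lam * (1/(2*sD) * dd)) / sD ^ 2) * S + -(lam / sD) * (1/(2*S) * (2*lam)))) lam := by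
    rw [hfun, ← hval]
    exact h7.exp
  have hθpos : 0 < theta α (m+1) x lam := by unfold theta; exact Real.exp_pos _
  have hderiv : deriv (fun t => theta α (m+1) x t) lam =
      theta α (m+1) x lam *
        (-((1 * sD - lam * (1/(2*sD) * dd)) / sD ^ 2) * S + -(lam / sD) * (1/(2*S) * (2*lam))) :=
    h8.deriv
  rw [hderiv]
  set θ := theta α (m+1) x lam with hθdef
  clear_value θ
  clear hderiv h8 hfun hval h7 h6 h5 h4 h3 h2 hdd hθdef
  set G := (1 * sD - lam * (1/(2*sD) * dd)) / sD ^ 2 with hGdef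
  clear_value K C M c1 A r B D sD Q S G
  -- lower bound on G
  have hdd1 : dd * (1 + lam) ≤ 1 := hddle1 (by omega)
  have hlamdd : lam * dd ≤ D := by
    calc lam * dd = dd * lam := mul_comm _ _
      _ ≤ dd * (1 + lam) := mul_le_mul_of_nonneg_left (by linarith) hdd0
      _ ≤ D := hddle
  have hsDne : sD ≠ 0 := hsD0.ne'
  have hG : 1/(2*sD) ≤ G := by
    have e1 : G = (2*sD^2 - lam*dd)/(2*sD^3) := by
      rw [hGdef]; field_simp
    rw [e1, div_le_div_iff₀ (by positivity) (by positivity)]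
    have h9 : sD*(lam*dd) ≤ sD*sD^2 := by
      rw [hsD2]; exact mul_le_mul_of_nonneg_left hlamdd hsD0.le
    have expand : (2*sD^2 - lam*dd)*(2*sD) - 1*(2*sD^3) = 2*(sD*sD^2 - sD*(lam*dd)) := by ring
    linarith only [h9, expand]
  have h2sD : (0:ℝ) < 2 * sD := by linarith
  have hG0 : 0 ≤ G := le_trans (le_of_lt (div_pos one_pos h2sD)) hG
  have hGS0 : 0 ≤ G * S := mul_nonneg hG0 hS0.le
  have hT20 : 0 ≤ (lam / sD) * (1/(2*S) * (2*lam)) :=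
    mul_nonneg (div_nonneg hlam hsD0.le) (mul_nonneg (by positivity) (by linarith))
  -- key inequality
  have key : c1 * Real.sqrt (1+A) ≤ G * S + (lam / sD) * (1/(2*S) * (2*lam)) := by
    rcases le_total lam r with hcase | hcase
    · -- lam ≤ r
      have hDB : D ≤ B := by
        rw [hDdef, hBdef]
        exact iterLog_mono α hmono h0 (m+1) (Set.mem_Ici.mpr hlam) (Set.mem_Ici.mpr hr0) hcase
      have hsDB : sD ≤ Real.sqrt B := by
        rw [hsDdef]; exact Real.sqrt_le_sqrt hDB
      have hkey2 : c1 * Real.sqrt (1+A) ≤ 1/(2*sD) * S := by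
        rcases le_total 1 A with hA1 | hA1
        · -- 1 ≤ A
          have hsqrtAB : Real.sqrt A * Real.sqrt B ≤ S := by
            have hABQ : A*B ≤ Q := by rw [hQdef]; linarith [sq_nonneg lam]
            rw [hSdef, ← Real.sqrt_mul hA0]
            rw [hQdef] at hABQ ⊢
            exact Real.sqrt_le_sqrt (by linarith [sq_nonneg lam])
          have h1A : Real.sqrt (1+A) ≤ Real.sqrt 2 * Real.sqrt A := by
            rw [← Real.sqrt_mul (by norm_num : (0:ℝ) ≤ 2)]
            exact Real.sqrt_le_sqrt (by linarith)
          have s1 : c1 * (Real.sqrt 2 * Real.sqrt A) ≤ Real.sqrt A / 2 := by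
            have h2' : c1 * Real.sqrt 2 ≤ 1/2 := by
              calc c1 * Real.sqrt 2 ≤ (1/(2*Real.sqrt 2)) * Real.sqrt 2 :=
                    mul_le_mul_of_nonneg_right hc1a (Real.sqrt_nonneg 2)
                _ = 1/2 := by
                  field_simp
            calc c1 * (Real.sqrt 2 * Real.sqrt A) = (c1 * Real.sqrt 2) * Real.sqrt A := by ring
              _ ≤ (1/2) * Real.sqrt A := mul_le_mul_of_nonneg_right h2' (Real.sqrt_nonneg A)
              _ = Real.sqrt A / 2 := by ring
          have s2 : Real.sqrt A / 2 ≤ 1/(2*sD) * S := by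
            have h3' : Real.sqrt A * sD ≤ S :=
              le_trans (mul_le_mul_of_nonneg_left hsDB (Real.sqrt_nonneg A)) hsqrtAB
            have e1 : 1/(2*sD) * S = S / (2*sD) := by ring
            rw [e1, le_div_iff₀ h2sD]
            calc Real.sqrt A / 2 * (2*sD) = Real.sqrt A * sD := by ring
              _ ≤ S := h3'
          calc c1 * Real.sqrt (1+A) ≤ c1 * (Real.sqrt 2 * Real.sqrt A) :=
                mul_le_mul_of_nonneg_left h1A hc10.le
            _ ≤ Real.sqrt A / 2 := s1
            _ ≤ 1/(2*sD) * S := s2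
        · -- A ≤ 1
          have hxe : 1 + ‖x‖^2 ≤ Real.exp 1 := by
            calc 1 + ‖x‖^2 = Real.exp A := by rw [hAdef, Real.exp_log (by positivity)]
              _ ≤ Real.exp 1 := Real.exp_le_exp.mpr hA1
          have hre : r ≤ Real.sqrt (Real.exp 1) := by
            rw [hrdef]; exact Real.sqrt_le_sqrt hxe
          have hBC : B ≤ C := by
            have h1' := iterLog_linear α hd1 hmono h0 hder (m+1) r hr0
            have h2' : α 0 * (1 + r) ≤ α 0 * (1 + Real.sqrt (Real.exp 1)) :=
              mul_le_mul_of_nonneg_left (by linarith) (by linarith)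
            rw [hCdef, hBdef]; linarith
          have hsDC : sD ≤ Real.sqrt C := by
            rw [hsDdef]; exact Real.sqrt_le_sqrt (le_trans hDB hBC)
          have h1AS : Real.sqrt (1+A) ≤ S := by
            rw [hSdef, hQdef]
            exact Real.sqrt_le_sqrt (by linarith [sq_nonneg lam, hAP])
          calc c1 * Real.sqrt (1+A) ≤ (1/(2*Real.sqrt C)) * S :=
                mul_le_mul hc1b h1AS (Real.sqrt_nonneg _) (by positivity)
            _ ≤ 1/(2*sD) * S := by
                apply mul_le_mul_of_nonneg_right _ hS0.le
                exact one_div_le_one_div_of_le h2sD (by linarith)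
      have hstep : 1/(2*sD) * S ≤ G * S := mul_le_mul_of_nonneg_right hG hS0.le
      linarith only [hkey2, hstep, hT20]
    · -- r ≤ lam
      have hlam1 : 1 ≤ lam := le_trans hr1 hcase
      set L := 1 + Real.log (1+lam) with hLdef
      clear_value L
      have hloglam : 0 ≤ Real.log (1+lam) := Real.log_nonneg (by linarith)
      have hL1 : 1 ≤ L := by rw [hLdef]; linarith
      have hL2 : L ≤ 2*lam := by
        have h := Real.log_le_sub_one_of_pos (show (0:ℝ) < 1+lam by linarith)
        rw [hLdef]; linarith
      have hBD : B ≤ D := by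
        rw [hDdef, hBdef]
        exact iterLog_mono α hmono h0 (m+1) (Set.mem_Ici.mpr hr0) (Set.mem_Ici.mpr hlam) hcase
      have hDKL : D ≤ K * L := by
        have h := iterLog_log_bound α hd1 hmono h0 hder m lam hlam
        rw [hDdef, hKdef, hLdef]; exact h
      have hA2L : A ≤ 2*L := by
        have h1' : 1 + ‖x‖^2 ≤ (1+lam)^2 := by
          have q1 : r^2 ≤ lam^2 := pow_le_pow_left₀ hr0 hcase 2
          have q2 : lam^2 ≤ (1+lam)^2 := pow_le_pow_left₀ hlam (by linarith) 2
          linarith [hr2]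
        have h2' : A ≤ Real.log ((1+lam)^2) := by
          rw [hAdef]; exact Real.log_le_log (by positivity) h1'
        rw [Real.log_pow] at h2'
        rw [hLdef]; push_cast at h2'; linarith
      have hBKL : B ≤ K*L := le_trans hBD hDKL
      have p1 : A*B ≤ (2*L)*(K*L) := mul_le_mul hA2L hBKL (by linarith) (by linarith)
      have p2 : L*L ≤ (2*lam)*(2*lam) := mul_le_mul hL2 hL2 (by linarith) (by linarith)
      have p3 : K*(L*L) ≤ K*((2*lam)*(2*lam)) := mul_le_mul_of_nonneg_left p2 (by linarith)
      have hPle : A*B ≤ 8*K*lam^2 := by linarith [p1, p3]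
      have hlamsq : 1 ≤ lam^2 := by
        have q := mul_le_mul hlam1 hlam1 zero_le_one (by linarith)
        linarith [q]
      have hQle : Q ≤ (2+8*K)*lam^2 := by
        rw [hQdef]
        linarith [hPle, hlamsq]
      have hSM : S ≤ M * lam := by
        rw [hSdef, hMdef]
        calc Real.sqrt Q ≤ Real.sqrt ((2+8*K)*lam^2) := Real.sqrt_le_sqrt hQle
          _ = Real.sqrt (2+8*K) * Real.sqrt (lam^2) := Real.sqrt_mul (by linarith) _
          _ = Real.sqrt (2+8*K) * lam := by rw [Real.sqrt_sq hlam]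
      have hsDKL : sD ≤ Real.sqrt K * Real.sqrt L := by
        rw [hsDdef, ← Real.sqrt_mul (by linarith : (0:ℝ) ≤ K)]
        exact Real.sqrt_le_sqrt hDKL
      have hsLL : Real.sqrt L * Real.sqrt L = L := Real.mul_self_sqrt (by linarith)
      have h1A3L : Real.sqrt (1+A) ≤ Real.sqrt 3 * Real.sqrt L := by
        rw [← Real.sqrt_mul (by norm_num : (0:ℝ) ≤ 3)]
        exact Real.sqrt_le_sqrt (by linarith [hA2L, hL1])
      have hmain : c1 * Real.sqrt (1+A) ≤ lam*lam/(sD*S) := by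
        rw [le_div_iff₀ (mul_pos hsD0 hS0)]
        have e1 : c1 * Real.sqrt (1+A) ≤ c1 * (Real.sqrt 3 * Real.sqrt L) :=
          mul_le_mul_of_nonneg_left h1A3L hc10.le
        have e2 : sD * S ≤ (Real.sqrt K * Real.sqrt L) * (M * lam) :=
          mul_le_mul hsDKL hSM hS0.le (by positivity)
        have e3 : c1 * Real.sqrt (1+A) * (sD*S) ≤
            (c1 * (Real.sqrt 3 * Real.sqrt L)) * ((Real.sqrt K * Real.sqrt L) * (M*lam)) :=
          mul_le_mul e1 e2 (mul_nonneg hsD0.le hS0.le) (mul_nonneg hc10.le (by positivity))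
        have e4 : (c1 * (Real.sqrt 3 * Real.sqrt L)) * ((Real.sqrt K * Real.sqrt L) * (M*lam))
            = (c1 * (2*Real.sqrt 3*M*Real.sqrt K)) * ((Real.sqrt L*Real.sqrt L) * lam) / 2 := by
          ring
        have e5 : c1 * (2*Real.sqrt 3*M*Real.sqrt K) ≤ 1 := by
          have h := hc1c
          rw [le_div_iff₀ hden3] at h
          linarith
        have e6 : (Real.sqrt L*Real.sqrt L) * lam ≤ (2*lam)*lam := by
          rw [hsLL]; exact mul_le_mul_of_nonneg_right hL2 (by linarith)
        have e7 : (c1 * (2*Real.sqrt 3*M*Real.sqrt K)) * ((Real.sqrt L*Real.sqrt L) * lam)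
            ≤ 1 * ((2*lam)*lam) :=
          mul_le_mul e5 e6
            (mul_nonneg (mul_nonneg (Real.sqrt_nonneg L) (Real.sqrt_nonneg L)) (by linarith))
            zero_le_one
        calc c1 * Real.sqrt (1+A) * (sD*S)
            ≤ (c1 * (Real.sqrt 3 * Real.sqrt L)) * ((Real.sqrt K * Real.sqrt L) * (M*lam)) := e3
          _ = (c1 * (2*Real.sqrt 3*M*Real.sqrt K)) * ((Real.sqrt L*Real.sqrt L) * lam) / 2 := e4
          _ ≤ (1 * ((2*lam)*lam)) / 2 := by linarith only [e7]
          _ = lam * lam := by ring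
      have hT2eq : lam*lam/(sD*S) = (lam / sD) * (1/(2*S) * (2*lam)) := by
        have hSne : S ≠ 0 := hS0.ne'
        field_simp
      rw [hT2eq] at hmain
      linarith only [hmain, hGS0]
  calc c1 * Real.sqrt (1+A) * θ
      = θ * (c1 * Real.sqrt (1+A)) := by ring
    _ ≤ θ * (G * S + (lam / sD) * (1/(2*S) * (2*lam))) :=
        mul_le_mul_of_nonneg_left key hθpos.le
    _ = -(θ * (-G * S + -(lam / sD) * (1/(2*S) * (2*lam)))) := by ring
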